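/- arXiv:1703.08311 — 3 statements merged into one kernel-verified Lean document; each statement's English description precedes it below -/
import Mathlib

section
/- For a switched discrete-time linear system η_{k+1} = A_{σ(k)} η_k with modes A_1,…,A_N, if there exist positive definite matrices P_1,…,P_N and a Metzler-type matrix Π with nonnegative entries π_{ij} ≥ 0 and columns summing to one (∑_i π_{ij} = 1 for all j) such that A_jᵀ(∑_i π_{ij} P_i) A_j − P_j ≺ 0 for all j, then the switching policy σ(k) = argmin_i η_kᵀ P_i η_k makes the origin globally asymptotically stable. -/
open Matrix Filter

/-- Negative definiteness of a real matrix. -/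
def NegDef {ι : Type*} [Fintype ι] (M : Matrix ι ι ℝ) : Prop := (-M).PosDef


lemma dot_sum_smul {n N : ℕ} (cc : Fin N → ℝ) (P : Fin N → Matrix (Fin n) (Fin n) ℝ)
    (v : Fin n → ℝ) :
    v ⬝ᵥ ((∑ i, cc i • P i) *ᵥ v) = ∑ i, cc i * (v ⬝ᵥ (P i *ᵥ v)) := by
  simp only [dotProduct, mulVec, Matrix.sum_apply, Matrix.smul_apply, smul_eq_mul,
    Finset.sum_mul, Finset.mul_sum]
  calc ∑ x : Fin n, ∑ y : Fin n, ∑ i : Fin N, v x * (cc i * P i x y * v y)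
      = ∑ x : Fin n, ∑ i : Fin N, ∑ y : Fin n, v x * (cc i * P i x y * v y) :=
        Finset.sum_congr rfl fun x _ => Finset.sum_comm
    _ = ∑ i : Fin N, ∑ x : Fin n, ∑ y : Fin n, v x * (cc i * P i x y * v y) :=
        Finset.sum_comm
    _ = ∑ i : Fin N, ∑ x : Fin n, ∑ y : Fin n, cc i * (v x * (P i x y * v y)) := by
        refine Finset.sum_congr rfl fun i _ => Finset.sum_congr rfl fun x _ =>
          Finset.sum_congr rfl fun y _ => by ring

lemma dot_transpose {n : ℕ} (A S : Matrix (Fin n) (Fin n) ℝ) (x : Fin n → ℝ) :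
    (A *ᵥ x) ⬝ᵥ (S *ᵥ (A *ᵥ x)) = x ⬝ᵥ ((Aᵀ * S * A) *ᵥ x) := by
  rw [Matrix.dotProduct_mulVec x, ← Matrix.vecMul_vecMul, ← Matrix.vecMul_vecMul,
    Matrix.vecMul_transpose, ← Matrix.dotProduct_mulVec, ← Matrix.dotProduct_mulVec]


lemma quad_cont {n : ℕ} (M : Matrix (Fin n) (Fin n) ℝ) :
    Continuous fun x : EuclideanSpace ℝ (Fin n) => (x : Fin n → ℝ) ⬝ᵥ (M *ᵥ (x : Fin n → ℝ)) := by
  simp only [dotProduct, mulVec]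
  fun_prop

lemma quad_lower {n : ℕ} {M : Matrix (Fin n) (Fin n) ℝ} (hM : M.PosDef) :
    ∃ ε > 0, ∀ x : Fin n → ℝ, ε * (x ⬝ᵥ x) ≤ x ⬝ᵥ (M *ᵥ x) := by
  rcases Nat.eq_zero_or_pos n with h0 | hn
  · subst h0
    exact ⟨1, one_pos, fun x => by simp [dotProduct]⟩
  · haveI : Nontrivial (EuclideanSpace ℝ (Fin n)) := by
      have : Nonempty (Fin n) := ⟨⟨0, hn⟩⟩
      infer_instance
    obtain ⟨x0, hx0S, hmin⟩ := (isCompact_sphere (0 : EuclideanSpace ℝ (Fin n)) 1).exists_isMinOn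
      (NormedSpace.sphere_nonempty.mpr zero_le_one) (quad_cont M).continuousOn
    have hx0n : ‖x0‖ = 1 := by simpa using hx0S
    have hx0 : x0 ≠ 0 := by intro h; rw [h] at hx0n; simp at hx0n
    have hdot : ∀ x : EuclideanSpace ℝ (Fin n), (x : Fin n → ℝ) ⬝ᵥ (x : Fin n → ℝ) = ‖x‖ ^ 2 := by
      intro x
      rw [← real_inner_self_eq_norm_sq]
      simp [PiLp.inner_apply, dotProduct, mul_comm]
      rw [EuclideanSpace.norm_eq, Real.sq_sqrt (Finset.sum_nonneg fun i _ => sq_nonneg _)]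
      simp [sq]
    refine ⟨x0 ⬝ᵥ (M *ᵥ x0), hM.dotProduct_mulVec_pos (x := x0.ofLp) (by simpa using hx0), fun x => ?_⟩
    by_cases hx : x = 0
    · simp [hx]
    · set xE : EuclideanSpace ℝ (Fin n) := WithLp.toLp 2 x with hxE
      have hxn : ‖xE‖ ≠ 0 := by
        simpa using (norm_ne_zero_iff.mpr (show xE ≠ 0 from by simpa [hxE] using hx))
      set y : EuclideanSpace ℝ (Fin n) := ‖xE‖⁻¹ • xE with hy
      have hyS : y ∈ Metric.sphere (0 : EuclideanSpace ℝ (Fin n)) 1 := by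
        simp [hy, norm_smul, abs_of_nonneg (inv_nonneg.mpr (norm_nonneg _)), inv_mul_cancel₀ hxn]
      have hfy := hmin hyS
      have hyx : (y : Fin n → ℝ) = ‖xE‖⁻¹ • x := rfl
      have hquad : (y : Fin n → ℝ) ⬝ᵥ (M *ᵥ (y : Fin n → ℝ))
          = ‖xE‖⁻¹ ^ 2 * (x ⬝ᵥ (M *ᵥ x)) := by
        rw [hyx, mulVec_smul, smul_dotProduct, dotProduct_smul]
        ring_nf
      have hxx : x ⬝ᵥ x = ‖xE‖ ^ 2 := hdot xE
      have h2 : x0 ⬝ᵥ (M *ᵥ x0) ≤ ‖xE‖⁻¹ ^ 2 * (x ⬝ᵥ (M *ᵥ x)) := by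
        simpa [hquad] using hfy
      have hpos : (0:ℝ) < ‖xE‖ ^ 2 := by positivity
      rw [hxx]
      calc x0 ⬝ᵥ (M *ᵥ x0) * ‖xE‖ ^ 2 ≤ (‖xE‖⁻¹ ^ 2 * (x ⬝ᵥ (M *ᵥ x))) * ‖xE‖ ^ 2 := by
            exact mul_le_mul_of_nonneg_right h2 hpos.le
        _ = x ⬝ᵥ (M *ᵥ x) := by field_simp


lemma quad_upper {n : ℕ} (M : Matrix (Fin n) (Fin n) ℝ) :
    ∃ C > 0, ∀ x : Fin n → ℝ, x ⬝ᵥ (M *ᵥ x) ≤ C * (x ⬝ᵥ x) := by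
  refine ⟨1 + ∑ a, ∑ b, |M a b|, by positivity, fun x => ?_⟩
  have hxx : (0:ℝ) ≤ x ⬝ᵥ x := Finset.sum_nonneg fun i _ => mul_self_nonneg _
  have hsq : ∀ a, (x a) * (x a) ≤ x ⬝ᵥ x := fun a =>
    Finset.single_le_sum (fun i _ => mul_self_nonneg (x i)) (Finset.mem_univ a)
  have hab : ∀ a b, |x a| * |x b| ≤ x ⬝ᵥ x := by
    intro a b
    nlinarith [hsq a, hsq b, sq_nonneg (|x a| - |x b|), abs_nonneg (x a), abs_nonneg (x b),
      abs_mul_abs_self (x a), abs_mul_abs_self (x b)]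
  calc x ⬝ᵥ (M *ᵥ x) = ∑ a, ∑ b, x a * (M a b * x b) := by
        simp [dotProduct, mulVec, Finset.mul_sum]
    _ ≤ ∑ a, ∑ b, |M a b| * (x ⬝ᵥ x) := by
        refine Finset.sum_le_sum fun a _ => Finset.sum_le_sum fun b _ => ?_
        calc x a * (M a b * x b) ≤ |x a * (M a b * x b)| := le_abs_self _
          _ = |M a b| * (|x a| * |x b|) := by rw [abs_mul, abs_mul]; ring
          _ ≤ |M a b| * (x ⬝ᵥ x) := mul_le_mul_of_nonneg_left (hab a b) (abs_nonneg _)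
    _ = (∑ a, ∑ b, |M a b|) * (x ⬝ᵥ x) := by rw [Finset.sum_mul]; simp [Finset.sum_mul]
    _ ≤ (1 + ∑ a, ∑ b, |M a b|) * (x ⬝ᵥ x) := by
        apply mul_le_mul_of_nonneg_right _ hxx
        have : (0:ℝ) ≤ ∑ a, ∑ b, |M a b| := by positivity
        linarith

/-- Lyapunov–Metzler stability. -/
theorem stmt0 {n N : ℕ} (A P : Fin N → Matrix (Fin n) (Fin n) ℝ)
    (hP : ∀ i, (P i).PosDef) (Pm : Fin N → Fin N → ℝ)
    (hπ : ∀ i j, 0 ≤ Pm i j) (hcol : ∀ j, ∑ i, Pm i j = 1)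
    (hLM : ∀ j, NegDef ((A j)ᵀ * (∑ i, Pm i j • P i) * A j - P j))
    (η : ℕ → Fin n → ℝ) (σ : ℕ → Fin N)
    (hσ : ∀ k i, η k ⬝ᵥ ((P (σ k)) *ᵥ η k) ≤ η k ⬝ᵥ ((P i) *ᵥ η k))
    (hdyn : ∀ k, η (k + 1) = (A (σ k)) *ᵥ η k) :
    Tendsto η atTop (nhds 0) := by
  haveI hNe : Nonempty (Fin N) := ⟨σ 0⟩
  -- gap constants from the Lyapunov-Metzler inequalities
  have hgap : ∀ j, (P j - (A j)ᵀ * (∑ i, Pm i j • P i) * A j).PosDef := by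
    intro j
    have := hLM j
    rw [NegDef, neg_sub] at this
    exact this
  choose ε hε hεle using fun j => quad_lower (hgap j)
  choose C hC hCle using fun j => quad_upper (P j)
  choose c hc hcle using fun j => quad_lower (hP j)
  set εm : ℝ := Finset.univ.inf' Finset.univ_nonempty ε with hεm
  set Cm : ℝ := Finset.univ.sup' Finset.univ_nonempty C with hCm
  set cm : ℝ := Finset.univ.inf' Finset.univ_nonempty c with hcm
  have hεmpos : 0 < εm := by
    rw [hεm, Finset.lt_inf'_iff]; exact fun j _ => hε j
  have hCmpos : 0 < Cm := by
    obtain ⟨j⟩ := hNe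
    exact lt_of_lt_of_le (hC j) (Finset.le_sup' C (Finset.mem_univ j))
  have hcmpos : 0 < cm := by
    rw [hcm, Finset.lt_inf'_iff]; exact fun j _ => hc j
  set W : ℕ → ℝ := fun k => η k ⬝ᵥ ((P (σ k)) *ᵥ η k) with hW
  have hdotnn : ∀ k, (0:ℝ) ≤ η k ⬝ᵥ η k :=
    fun k => Finset.sum_nonneg fun i _ => mul_self_nonneg _
  have hWlb : ∀ k, cm * (η k ⬝ᵥ η k) ≤ W k := by
    intro k
    calc cm * (η k ⬝ᵥ η k) ≤ c (σ k) * (η k ⬝ᵥ η k) :=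
          mul_le_mul_of_nonneg_right (Finset.inf'_le c (Finset.mem_univ _)) (hdotnn k)
      _ ≤ W k := hcle (σ k) (η k)
  have hWnn : ∀ k, 0 ≤ W k := fun k =>
    le_trans (mul_nonneg hcmpos.le (hdotnn k)) (hWlb k)
  set r : ℝ := max 0 (1 - εm / Cm) with hr
  have hr0 : 0 ≤ r := le_max_left _ _
  have hr1 : r < 1 := by
    rw [hr, max_lt_iff]
    constructor
    · norm_num
    · have : 0 < εm / Cm := div_pos hεmpos hCmpos
      linarith
  have key : ∀ k, W (k + 1) ≤ r * W k := by
    intro k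
    set j := σ k with hj
    set x := η k with hx
    set S : Matrix (Fin n) (Fin n) ℝ := ∑ i, Pm i j • P i with hS
    have hx' : η (k + 1) = A j *ᵥ x := hdyn k
    -- Step 1: W (k+1) ≤ x' S x'
    have step1 : W (k + 1) ≤ η (k+1) ⬝ᵥ (S *ᵥ η (k+1)) := by
      have h1 : W (k+1) = ∑ i, Pm i j * (η (k+1) ⬝ᵥ ((P (σ (k+1))) *ᵥ η (k+1))) := by
        rw [← Finset.sum_mul, hcol j, one_mul]
      rw [h1, hS, dot_sum_smul]
      refine Finset.sum_le_sum fun i _ => ?_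
      exact mul_le_mul_of_nonneg_left (hσ (k+1) i) (hπ i j)
    -- Step 2: x' S x' = x (AᵀSA) x
    have step2 : η (k+1) ⬝ᵥ (S *ᵥ η (k+1)) = x ⬝ᵥ (((A j)ᵀ * S * A j) *ᵥ x) := by
      rw [hx', dot_transpose]
    -- Step 3: x (AᵀSA) x ≤ W k - εm (x⬝x)
    have step3 : x ⬝ᵥ (((A j)ᵀ * S * A j) *ᵥ x) ≤ W k - εm * (x ⬝ᵥ x) := by
      have h3 := hεle j x
      rw [Matrix.sub_mulVec, dotProduct_sub] at h3
      have h4 : εm * (x ⬝ᵥ x) ≤ ε j * (x ⬝ᵥ x) :=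
        mul_le_mul_of_nonneg_right (Finset.inf'_le ε (Finset.mem_univ _)) (hdotnn k)
      have hWk : W k = x ⬝ᵥ ((P j) *ᵥ x) := rfl
      rw [hWk]
      linarith
    have hWub : W k ≤ Cm * (x ⬝ᵥ x) := by
      calc W k ≤ C j * (x ⬝ᵥ x) := hCle j x
        _ ≤ Cm * (x ⬝ᵥ x) :=
          mul_le_mul_of_nonneg_right (Finset.le_sup' C (Finset.mem_univ _)) (hdotnn k)
    have hchain : W (k+1) ≤ W k - εm * (x ⬝ᵥ x) :=
      le_trans step1 (le_trans (le_of_eq step2) step3)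
    have hfrac : εm / Cm * W k ≤ εm * (x ⬝ᵥ x) := by
      rw [div_mul_eq_mul_div, div_le_iff₀ hCmpos]
      calc εm * W k ≤ εm * (Cm * (x ⬝ᵥ x)) := mul_le_mul_of_nonneg_left hWub hεmpos.le
        _ = εm * (x ⬝ᵥ x) * Cm := by ring
    have : W (k+1) ≤ (1 - εm / Cm) * W k := by linarith
    calc W (k+1) ≤ (1 - εm / Cm) * W k := this
      _ ≤ r * W k := mul_le_mul_of_nonneg_right (le_max_right _ _) (hWnn k)
  -- geometric decay
  have hgeo : ∀ k, W k ≤ r ^ k * W 0 := by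
    intro k
    induction k with
    | zero => simp
    | succ k ih =>
      calc W (k+1) ≤ r * W k := key k
        _ ≤ r * (r ^ k * W 0) := mul_le_mul_of_nonneg_left ih hr0
        _ = r ^ (k+1) * W 0 := by ring
  have hWto0 : Tendsto W atTop (nhds 0) := by
    apply squeeze_zero hWnn hgeo
    have := (tendsto_pow_atTop_nhds_zero_of_lt_one hr0 hr1).mul_const (W 0)
    simpa using this
  -- coordinates tend to zero
  rw [tendsto_pi_nhds]
  intro a
  have hsqle : ∀ k, (η k a) ^ 2 ≤ W k / cm := by
    intro k
    have h1 : (η k a) ^ 2 ≤ η k ⬝ᵥ η k := by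
      rw [sq]
      exact Finset.single_le_sum (fun i _ => mul_self_nonneg (η k i)) (Finset.mem_univ a)
    have h2 : η k ⬝ᵥ η k ≤ W k / cm := by
      rw [le_div_iff₀ hcmpos]
      calc η k ⬝ᵥ η k * cm = cm * (η k ⬝ᵥ η k) := by ring
        _ ≤ W k := hWlb k
    linarith
  have hsq0 : Tendsto (fun k => (η k a) ^ 2) atTop (nhds 0) := by
    apply squeeze_zero (fun k => sq_nonneg _) hsqle
    have := hWto0.div_const cm
    simpa using this
  have habs : Tendsto (fun k => |η k a|) atTop (nhds 0) := by
    have h := (Real.continuous_sqrt.tendsto 0).comp hsq0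
    simp only [Function.comp_def] at h
    simpa [Real.sqrt_sq_eq_abs] using h
  simpa using tendsto_zero_iff_abs_tendsto_zero _ |>.mpr habs
end

section
/- For block-diagonal matrices A_j = diag(A¹_{δ(1,j)},…,A^N_{δ(N,j)}), P_i = diag(P¹_{δ(1,i)},…,P^N_{δ(N,i)}) and Q = diag(Q¹,…,Q^N) with δ(n,i) = 1 iff n = i, and with Π having π_{ij} = p_i for all j ≠ i and π_{ii} = m_i, the Lyapunov–Metzler inequality A_jᵀ(∑_i π_{ij}P_i)A_j − P_j + Q ≺ 0 holds for all j if and only if for every i: (A^i_1)ᵀ(m_i P^i_1 + (1−m_i)P^i_0)A^i_1 − P^i_1 + Q^i ≺ 0 and (A^i_0)ᵀ(p_i P^i_1 + (1−p_i)P^i_0)A^i_0 − P^i_0 + Q^i ≺ 0. -/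
open Matrix

lemma bd_qform {N : ℕ} {d : Fin N → ℕ} (f : (i : Fin N) → Matrix (Fin (d i)) (Fin (d i)) ℝ)
    (x : (Σ i, Fin (d i)) → ℝ) :
    star x ⬝ᵥ (blockDiagonal' f *ᵥ x)
      = ∑ i, star (fun a => x ⟨i, a⟩) ⬝ᵥ (f i *ᵥ fun a => x ⟨i, a⟩) := by
  simp only [dotProduct, mulVec, Pi.star_apply, star_trivial]
  rw [← Finset.univ_sigma_univ, Finset.sum_sigma]
  refine Finset.sum_congr rfl fun i _ => Finset.sum_congr rfl fun a _ => ?_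
  congr 1
  rw [Finset.sum_sigma]
  rw [Finset.sum_eq_single_of_mem i (by simp)]
  · simp [blockDiagonal'_apply_eq]
  · intro j _ hj
    apply Finset.sum_eq_zero
    intro b _
    rw [blockDiagonal'_apply_ne f a b (Ne.symm hj), zero_mul]

lemma bd_posdef_iff {N : ℕ} {d : Fin N → ℕ} (f : (i : Fin N) → Matrix (Fin (d i)) (Fin (d i)) ℝ) :
    (blockDiagonal' f).PosDef ↔ ∀ i, (f i).PosDef := by
  constructor
  · intro h i
    rw [posDef_iff_dotProduct_mulVec] at h ⊢
    refine ⟨?_, ?_⟩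
    · have h1 := h.1
      rw [Matrix.IsHermitian, blockDiagonal'_conjTranspose,
        blockDiagonal'_inj] at h1
      exact congrFun h1 i
    · intro v hv
      set x : ((i : Fin N) × Fin (d i)) → ℝ :=
        fun q => if hq : q.1 = i then v (hq ▸ q.2) else 0 with hx
      have hxa : ∀ a, x ⟨i, a⟩ = v a := fun a => by simp [hx]
      have hx0 : x ≠ 0 := by
        obtain ⟨a, ha⟩ := Function.ne_iff.mp hv
        exact Function.ne_iff.mpr ⟨⟨i, a⟩, by simpa [hxa] using ha⟩
      have := h.2 (x := x) hx0
      rw [bd_qform f x] at this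
      rw [Finset.sum_eq_single_of_mem i (by simp)] at this
      · simpa [hxa] using this
      · intro j _ hj
        have : (fun a => x ⟨j, a⟩) = 0 := by
          funext a; simp [hx, hj]
        simp [this]
  · intro h
    rw [posDef_iff_dotProduct_mulVec]
    refine ⟨?_, ?_⟩
    · rw [Matrix.IsHermitian, blockDiagonal'_conjTranspose]
      exact congrArg _ (funext fun i => (h i).1)
    · intro x hx
      rw [bd_qform f x]
      obtain ⟨⟨i, a⟩, ha⟩ := Function.ne_iff.mp hx
      have key : ∀ j, 0 ≤ star (fun a => x ⟨j, a⟩) ⬝ᵥ (f j *ᵥ fun a => x ⟨j, a⟩) :=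
        fun j => (h j).posSemidef.dotProduct_mulVec_nonneg _
      refine Finset.sum_pos' (fun j _ => key j) ⟨i, by simp, ?_⟩
      exact (posDef_iff_dotProduct_mulVec.mp (h i)).2 (Function.ne_iff.mpr ⟨a, ha⟩)

lemma bd_negdef_iff {N : ℕ} {d : Fin N → ℕ} (f : (i : Fin N) → Matrix (Fin (d i)) (Fin (d i)) ℝ) :
    NegDef (blockDiagonal' f) ↔ ∀ i, NegDef (f i) := by
  unfold NegDef
  rw [← blockDiagonal'_neg, bd_posdef_iff]
  simp


/-- For the block-diagonal structured matrices and Π with π_{ii} = m_i,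
π_{ij} = p_i for j ≠ i (columns summing to one), the lumped Lyapunov–Metzler
inequalities are equivalent to the pair of per-subsystem inequalities. -/
theorem stmt6 {N : ℕ} (hN : 2 ≤ N) (d : Fin N → ℕ)
    (A0 A1 P0 P1 Q : (i : Fin N) → Matrix (Fin (d i)) (Fin (d i)) ℝ)
    (hP0 : ∀ i, (P0 i).PosDef) (hP1 : ∀ i, (P1 i).PosDef)
    (hQ : ∀ i, (Q i).IsSymm)
    (m p : Fin N → ℝ) (hm : ∀ i, m i ∈ Set.Icc (0:ℝ) 1)
    (hp : ∀ i, p i ∈ Set.Icc (0:ℝ) 1)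
    (Pm : Fin N → Fin N → ℝ) (hPm : ∀ i j, Pm i j = if i = j then m i else p i)
    (hcol : ∀ j, ∑ i, Pm i j = 1) :
    (∀ j, NegDef
        ((Matrix.blockDiagonal' fun nn => if nn = j then A1 nn else A0 nn)ᵀ *
          (∑ i, Pm i j • Matrix.blockDiagonal' fun nn => if nn = i then P1 nn else P0 nn) *
          (Matrix.blockDiagonal' fun nn => if nn = j then A1 nn else A0 nn) -
          (Matrix.blockDiagonal' fun nn => if nn = j then P1 nn else P0 nn) +
          Matrix.blockDiagonal' Q)) ↔
    (∀ i, NegDef ((A1 i)ᵀ * (m i • P1 i + (1 - m i) • P0 i) * A1 i - P1 i + Q i) ∧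
          NegDef ((A0 i)ᵀ * (p i • P1 i + (1 - p i) • P0 i) * A0 i - P0 i + Q i)) := by
  -- the sum of smul-blockdiagonals is a blockdiagonal
  have hsum : ∀ j, (∑ i, Pm i j • Matrix.blockDiagonal'
        fun nn => if nn = i then P1 nn else P0 nn)
      = blockDiagonal' (fun nn => ∑ i, Pm i j • if nn = i then P1 nn else P0 nn) := by
    intro j
    simp_rw [← blockDiagonal'_smul]
    calc (∑ x : Fin N, blockDiagonal' (Pm x j • fun nn => if nn = x then P1 nn else P0 nn))
        = blockDiagonal' (∑ x : Fin N, Pm x j • fun nn => if nn = x then P1 nn else P0 nn) :=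
          (map_sum (blockDiagonal'AddMonoidHom (fun i => Fin (d i)) (fun i => Fin (d i)) ℝ)
            _ Finset.univ).symm
      _ = _ := by
          have he : (∑ x : Fin N, Pm x j • fun nn => if nn = x then P1 nn else P0 nn)
              = (fun nn => ∑ i : Fin N, Pm i j • if nn = i then P1 nn else P0 nn) := by
            funext nn
            simp [Finset.sum_apply]
          rw [he]
  -- per-block convex combination
  have hblk : ∀ (nn j : Fin N), (∑ i, Pm i j • if nn = i then P1 nn else P0 nn)
      = Pm nn j • P1 nn + (1 - Pm nn j) • P0 nn := by
    intro nn j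
    classical
    rw [← Finset.add_sum_erase _ _ (Finset.mem_univ nn), if_pos rfl]
    congr 1
    have h2 : ∑ i ∈ Finset.univ.erase nn, Pm i j • (if nn = i then P1 nn else P0 nn)
        = (∑ i ∈ Finset.univ.erase nn, Pm i j) • P0 nn := by
      rw [Finset.sum_smul]
      refine Finset.sum_congr rfl fun i hi => ?_
      rw [if_neg (Ne.symm (Finset.ne_of_mem_erase hi))]
    rw [h2]
    congr 1
    have := Finset.add_sum_erase _ (fun i => Pm i j) (Finset.mem_univ nn)
    rw [hcol j] at this
    linarith
  have key : ∀ j, NegDef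
        ((Matrix.blockDiagonal' fun nn => if nn = j then A1 nn else A0 nn)ᵀ *
          (∑ i, Pm i j • Matrix.blockDiagonal' fun nn => if nn = i then P1 nn else P0 nn) *
          (Matrix.blockDiagonal' fun nn => if nn = j then A1 nn else A0 nn) -
          (Matrix.blockDiagonal' fun nn => if nn = j then P1 nn else P0 nn) +
          Matrix.blockDiagonal' Q)
      ↔ ∀ nn, NegDef ((if nn = j then A1 nn else A0 nn)ᵀ *
          (Pm nn j • P1 nn + (1 - Pm nn j) • P0 nn) *
          (if nn = j then A1 nn else A0 nn) -
          (if nn = j then P1 nn else P0 nn) + Q nn) := by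
    intro j
    rw [hsum j, blockDiagonal'_transpose, ← blockDiagonal'_mul, ← blockDiagonal'_mul,
      ← blockDiagonal'_sub, ← blockDiagonal'_add, bd_negdef_iff]
    constructor <;> intro h nn <;> have h2 := h nn <;>
      simp only [Pi.add_apply, Pi.sub_apply] at h2 ⊢ <;> rwa [hblk nn j] at *
  simp only [key]
  constructor
  · intro H i
    constructor
    · have := H i i
      rw [if_pos rfl, if_pos rfl, hPm, if_pos rfl] at this
      exact this
    · haveI : Nontrivial (Fin N) :=
        Fin.nontrivial_iff_two_le.mpr hN
      obtain ⟨j, hj⟩ := exists_ne i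
      have := H j i
      rw [if_neg (Ne.symm hj), if_neg (Ne.symm hj), hPm, if_neg (Ne.symm hj)] at this
      exact this
  · intro H j nn
    by_cases h : nn = j
    · rw [if_pos h, if_pos h, hPm]
      subst h
      rw [if_pos rfl]
      exact (H nn).1
    · rw [if_neg h, if_neg h, hPm, if_neg h]
      exact (H nn).2
end

section
/- Let V(η, i) = ηᵀ P_i η and suppose the Lyapunov–Metzler inequalities hold (with Q ⪰ 0). Then for any state η ≠ 0 and any mode j, choosing i* = argmin_i (A_j η)ᵀ P_i (A_j η) gives V(A_j η, i*) ≤ ∑_i π_{ij} (A_j η)ᵀ P_i (A_j η) < V(η, j) − ηᵀ Q η, i.e. the minimum of the quadratic Lyapunov functions strictly decreases along the switched trajectory by at least the stage cost. -/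
open Matrix

/-- Strict decrease of the min of the quadratic Lyapunov functions along the
switched trajectory, by at least the stage cost. -/
theorem stmt12 {n M : ℕ} (A P : Fin M → Matrix (Fin n) (Fin n) ℝ)
    (hP : ∀ i, (P i).PosDef) (Pm : Fin M → Fin M → ℝ)
    (hπ : ∀ i j, 0 ≤ Pm i j) (hcol : ∀ j, ∑ i, Pm i j = 1)
    (Q : Matrix (Fin n) (Fin n) ℝ) (hQ : Q.PosSemidef)
    (hLM : ∀ j, NegDef ((A j)ᵀ * (∑ i, Pm i j • P i) * A j - P j + Q))
    (η : Fin n → ℝ) (hη : η ≠ 0) (j : Fin M) (istar : Fin M)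
    (histar : ∀ i, (A j *ᵥ η) ⬝ᵥ (P istar *ᵥ (A j *ᵥ η))
        ≤ (A j *ᵥ η) ⬝ᵥ (P i *ᵥ (A j *ᵥ η))) :
    (A j *ᵥ η) ⬝ᵥ (P istar *ᵥ (A j *ᵥ η))
        ≤ ∑ i, Pm i j * ((A j *ᵥ η) ⬝ᵥ (P i *ᵥ (A j *ᵥ η))) ∧
    ∑ i, Pm i j * ((A j *ᵥ η) ⬝ᵥ (P i *ᵥ (A j *ᵥ η)))
        < η ⬝ᵥ (P j *ᵥ η) - η ⬝ᵥ (Q *ᵥ η) := by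
  set y := A j *ᵥ η with hy
  constructor
  · calc y ⬝ᵥ (P istar *ᵥ y) = ∑ i, Pm i j * (y ⬝ᵥ (P istar *ᵥ y)) := by
          rw [← Finset.sum_mul, hcol, one_mul]
      _ ≤ ∑ i, Pm i j * (y ⬝ᵥ (P i *ᵥ y)) := by
          apply Finset.sum_le_sum
          intro i _
          exact mul_le_mul_of_nonneg_left (histar i) (hπ i j)
  · have h := Matrix.PosDef.dotProduct_mulVec_pos (hLM j) hη
    simp only [neg_sub, neg_add, sub_mulVec, add_mulVec, neg_mulVec,
      dotProduct_add, dotProduct_sub, dotProduct_neg] at h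
    have key : η ⬝ᵥ (((A j)ᵀ * (∑ i, Pm i j • P i) * A j) *ᵥ η)
        = ∑ i, Pm i j * (y ⬝ᵥ (P i *ᵥ y)) := by
      rw [Matrix.mul_assoc, ← mulVec_mulVec, ← mulVec_mulVec,
        Matrix.dotProduct_mulVec, vecMul_transpose, ← hy]
      have hsum : (∑ i, Pm i j • P i) *ᵥ y = ∑ i, Pm i j • (P i *ᵥ y) := by
        ext k
        simp only [mulVec, dotProduct, Finset.sum_apply, Matrix.sum_apply,
          Matrix.smul_apply, Pi.smul_apply, smul_eq_mul, Finset.sum_mul,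
          Finset.mul_sum]
        rw [Finset.sum_comm]
        exact Finset.sum_congr rfl fun i _ => Finset.sum_congr rfl
          fun x _ => by ring
      rw [hsum]
      simp only [dotProduct, Finset.sum_apply, Pi.smul_apply, smul_eq_mul,
        Finset.mul_sum]
      rw [Finset.sum_comm]
      exact Finset.sum_congr rfl fun i _ => Finset.sum_congr rfl
        fun x _ => by ring
    simp only [star_trivial] at h
    rw [key] at h
    linarith
end
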